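/- Let N ≥ 1 and let μ be a probability mass function on the additive group G = (Fin N → ZMod 2) whose support is not contained in any coset of a proper additive subgroup of G. Define the sequence μ_0 = μ and μ_{j+1} = the distribution of X + Y where X and Y are independent with distribution μ_j (so μ_j is the degree-preserving recombination of μ with itself iterated j times). Then for every g ∈ G, μ_j(g) converges to 2^{−N} as j → ∞; consequently, for every 0 ≤ i ≤ N the probability under μ_j that the Hamming weight equals i converges to C(N, i)/2^N (the Binomial distribution B(N, 1/2)), and the expected Hamming weight under μ_j converges to N/2. -/

import Mathlib

open scoped ENNReal

/-- Degree (Hamming weight) of a binary vector: the number of coordinates equal to `1`. -/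
def degree {N : ℕ} (g : Fin N → ZMod 2) : ℕ :=
  (Finset.univ.filter fun i => g i = 1).card

/-- Distribution of `X + Y` for `X ~ μ` and `Y ~ ν` independent (convolution). -/
noncomputable def conv {G : Type*} [AddGroup G] (μ ν : PMF G) : PMF G :=
  μ.bind fun x => ν.map fun y => x + y

/-- `iterConv μ j` is the degree distribution after `j` recombination rounds:
`iterConv μ 0 = μ` and `iterConv μ (j+1)` is the distribution of `X + Y` with
`X, Y` independent, both distributed as `iterConv μ j`. -/
noncomputable def iterConv {G : Type*} [AddGroup G] (μ : PMF G) : ℕ → PMF G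
  | 0 => μ
  | j + 1 => conv (iterConv μ j) (iterConv μ j)

section Aux
open Finset


noncomputable def chi {N : ℕ} (s g : Fin N → ZMod 2) : ℝ :=
  ∏ i, (if s i = 1 ∧ g i = 1 then (-1 : ℝ) else 1)

lemma zmod2_cases : ∀ a : ZMod 2, a = 0 ∨ a = 1 := by decide

lemma chi_comm {N : ℕ} (s g : Fin N → ZMod 2) : chi s g = chi g s := by
  unfold chi; exact Finset.prod_congr rfl fun i _ => if_congr and_comm rfl rfl

lemma chi_add_right {N : ℕ} (s g h : Fin N → ZMod 2) :
    chi s (g + h) = chi s g * chi s h := by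
  unfold chi
  rw [← Finset.prod_mul_distrib]
  refine Finset.prod_congr rfl fun i _ => ?_
  have : (g + h) i = g i + h i := rfl
  rw [this]
  rcases zmod2_cases (s i) with hs | hs <;>
  rcases zmod2_cases (g i) with hg | hg <;>
  rcases zmod2_cases (h i) with hh | hh <;>
  simp [hs, hg, hh]

lemma chi_add_left {N : ℕ} (s t g : Fin N → ZMod 2) :
    chi (s + t) g = chi s g * chi t g := by
  rw [chi_comm, chi_add_right, chi_comm, chi_comm t]

lemma chi_zero_right {N : ℕ} (s : Fin N → ZMod 2) : chi s 0 = 1 := by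
  unfold chi
  refine Finset.prod_eq_one fun i _ => ?_
  simp [show (0 : Fin N → ZMod 2) i = 0 from rfl]

lemma chi_zero_left {N : ℕ} (g : Fin N → ZMod 2) : chi 0 g = 1 := by
  rw [chi_comm, chi_zero_right]

lemma chi_eq_one_or_neg_one {N : ℕ} (s g : Fin N → ZMod 2) :
    chi s g = 1 ∨ chi s g = -1 := by
  unfold chi
  refine Finset.prod_induction _ (fun x => x = 1 ∨ x = -1) ?_ (Or.inl rfl) ?_
  · rintro a b (ha | ha) (hb | hb) <;> simp [ha, hb]
  · intro i _; split <;> simp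

lemma abs_chi {N : ℕ} (s g : Fin N → ZMod 2) : |chi s g| = 1 := by
  rcases chi_eq_one_or_neg_one s g with h | h <;> simp [h]

lemma chi_single {N : ℕ} (s : Fin N → ZMod 2) (i0 : Fin N) (hs : s i0 = 1) :
    chi s (Pi.single i0 1) = -1 := by
  unfold chi
  rw [Finset.prod_eq_single i0]
  · simp [hs]
  · intro i _ hi
    simp [Pi.single_eq_of_ne hi]
  · simp

lemma neg_eq_self' {N : ℕ} (x : Fin N → ZMod 2) : -x = x := by
  funext i
  have : ∀ a : ZMod 2, -a = a := by decide
  exact this (x i)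

lemma add_self_zero {N : ℕ} (x : Fin N → ZMod 2) : x + x = 0 := by
  funext i
  have : ∀ a : ZMod 2, a + a = 0 := by decide
  exact this (x i)

lemma sum_chi_eq_zero {N : ℕ} (g : Fin N → ZMod 2) (hg : g ≠ 0) :
    ∑ s : Fin N → ZMod 2, chi s g = 0 := by
  obtain ⟨i0, hi0⟩ : ∃ i, g i ≠ 0 := by
    by_contra h; push_neg at h; exact hg (funext h)
  have hgi0 : g i0 = 1 := (zmod2_cases (g i0)).resolve_left hi0
  set e : Fin N → ZMod 2 := Pi.single i0 1 with he
  have key : ∑ s : Fin N → ZMod 2, chi s g = ∑ s : Fin N → ZMod 2, chi (e + s) g := by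
    exact (Fintype.sum_equiv (Equiv.addLeft e) _ _ fun s => rfl).symm
  have : ∑ s : Fin N → ZMod 2, chi (e + s) g = -∑ s : Fin N → ZMod 2, chi s g := by
    rw [← Finset.sum_neg_distrib]
    refine Finset.sum_congr rfl fun s _ => ?_
    rw [chi_add_left, chi_comm e g, chi_single g i0 hgi0]; ring
  have h2 := key.trans this
  linarith

lemma card_G {N : ℕ} : Fintype.card (Fin N → ZMod 2) = 2 ^ N := by
  simp [Fintype.card_fun]

lemma sum_chi {N : ℕ} (g : Fin N → ZMod 2) :
    ∑ s : Fin N → ZMod 2, chi s g = if g = 0 then (2 : ℝ) ^ N else 0 := by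
  split
  · next h => subst h; simp [chi_zero_right, Finset.card_univ, card_G]
  · next h => exact sum_chi_eq_zero g h

variable {N : ℕ}



section s2
variable {N : ℕ}

lemma conv_apply (μ ν : PMF (Fin N → ZMod 2)) (g : Fin N → ZMod 2) :
    conv μ ν g = ∑' x : Fin N → ZMod 2, μ x * ν (g - x) := by
  simp only [conv, PMF.bind_apply, PMF.map_apply]
  refine tsum_congr fun x => ?_
  congr 1
  refine (tsum_eq_single (g - x) ?_).trans ?_
  · intro b' hb'
    rw [if_neg]
    intro h
    exact hb' (by rw [h]; abel)
  · rw [if_pos (by abel)]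

/-- real-valued density -/
noncomputable def rD (μ : PMF (Fin N → ZMod 2)) (j : ℕ) (g : Fin N → ZMod 2) : ℝ := ((iterConv μ j) g).toReal

lemma rD_nonneg (μ : PMF (Fin N → ZMod 2)) (j : ℕ) (g : Fin N → ZMod 2) : 0 ≤ rD μ j g := ENNReal.toReal_nonneg

lemma sum_rD (μ : PMF (Fin N → ZMod 2)) (j : ℕ) : ∑ g : Fin N → ZMod 2, rD μ j g = 1 := by
  have h1 : ∑' g : Fin N → ZMod 2, (iterConv μ j) g = 1 := (iterConv μ j).tsum_coe
  rw [tsum_fintype] at h1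
  have := congrArg ENNReal.toReal h1
  rw [ENNReal.toReal_sum (fun g _ => PMF.apply_ne_top _ g)] at this
  simpa [rD] using this

lemma rD_succ (μ : PMF (Fin N → ZMod 2)) (j : ℕ) (g : Fin N → ZMod 2) :
    rD μ (j + 1) g = ∑ x : Fin N → ZMod 2, rD μ j x * rD μ j (g - x) := by
  have : iterConv μ (j + 1) g = ∑ x : Fin N → ZMod 2, (iterConv μ j) x * (iterConv μ j) (g - x) := by
    rw [show iterConv μ (j+1) = conv (iterConv μ j) (iterConv μ j) from rfl,
      conv_apply, tsum_fintype]
  rw [rD, this, ENNReal.toReal_sum]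
  · exact Finset.sum_congr rfl fun x _ => ENNReal.toReal_mul
  · exact fun x _ => ENNReal.mul_ne_top (PMF.apply_ne_top _ x) (PMF.apply_ne_top _ _)


noncomputable def Fco (μ : PMF (Fin N → ZMod 2)) (j : ℕ) (s : Fin N → ZMod 2) : ℝ :=
  ∑ g : Fin N → ZMod 2, rD μ j g * chi s g

lemma Fco_zero (μ : PMF (Fin N → ZMod 2)) (j : ℕ) : Fco μ j 0 = 1 := by
  unfold Fco
  simp [chi_zero_left, sum_rD]

lemma Fco_succ (μ : PMF (Fin N → ZMod 2)) (j : ℕ) (s : Fin N → ZMod 2) :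
    Fco μ (j + 1) s = (Fco μ j s) ^ 2 := by
  unfold Fco
  simp_rw [rD_succ, Finset.sum_mul]
  rw [Finset.sum_comm]
  have inner : ∀ x : Fin N → ZMod 2,
      (∑ g : Fin N → ZMod 2, rD μ j x * rD μ j (g - x) * chi s g)
      = (rD μ j x * chi s x) * ∑ h : Fin N → ZMod 2, rD μ j h * chi s h := by
    intro x
    rw [Finset.mul_sum]
    refine (Fintype.sum_equiv (Equiv.addLeft x)
      (fun h => rD μ j x * chi s x * (rD μ j h * chi s h)) _ fun h => ?_).symm
    simp only [Equiv.coe_addLeft]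
    rw [add_sub_cancel_left, chi_add_right]
    ring
  simp_rw [inner]
  rw [← Finset.sum_mul, sq]

lemma Fco_pow (μ : PMF (Fin N → ZMod 2)) (j : ℕ) (s : Fin N → ZMod 2) :
    Fco μ j s = (Fco μ 0 s) ^ (2 ^ j) := by
  induction j with
  | zero => simp
  | succ j ih => rw [Fco_succ, ih, ← pow_mul, pow_succ]

lemma inversion (μ : PMF (Fin N → ZMod 2)) (j : ℕ) (g : Fin N → ZMod 2) :
    ∑ s : Fin N → ZMod 2, Fco μ j s * chi s g = 2 ^ N * rD μ j g := by
  unfold Fco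
  simp_rw [Finset.sum_mul]
  have step : ∀ s h : Fin N → ZMod 2,
      rD μ j h * chi s h * chi s g = rD μ j h * chi s (h + g) := fun s h => by
    rw [chi_add_right]; ring
  simp_rw [step]
  rw [Finset.sum_comm]
  simp_rw [← Finset.mul_sum, sum_chi]
  rw [Finset.sum_eq_single g]
  · rw [if_pos (add_self_zero g)]; ring
  · intro h _ hne
    rw [if_neg, mul_zero]
    intro he
    apply hne
    rw [add_eq_zero_iff_eq_neg, neg_eq_self'] at he
    exact he
  · simp

lemma abs_Fco_le_one (μ : PMF (Fin N → ZMod 2)) (s : Fin N → ZMod 2) :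
    |Fco μ 0 s| ≤ 1 := by
  unfold Fco
  calc |∑ g : Fin N → ZMod 2, rD μ 0 g * chi s g|
      ≤ ∑ g : Fin N → ZMod 2, |rD μ 0 g * chi s g| := Finset.abs_sum_le_sum_abs _ _
    _ = ∑ g : Fin N → ZMod 2, rD μ 0 g := by
        refine Finset.sum_congr rfl fun g _ => ?_
        rw [abs_mul, abs_chi, mul_one, abs_of_nonneg (rD_nonneg μ 0 g)]
    _ = 1 := sum_rD μ 0


lemma rD_zero_pos_iff (μ : PMF (Fin N → ZMod 2)) (g : Fin N → ZMod 2) :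
    rD μ 0 g ≠ 0 ↔ μ g ≠ 0 := by
  unfold rD
  rw [show iterConv μ 0 = μ from rfl]
  rw [ne_eq, ENNReal.toReal_eq_zero_iff]
  simp [PMF.apply_ne_top μ g]

lemma abs_Fco_lt_one (μ : PMF (Fin N → ZMod 2))
    (hnd : ¬ ∃ (H : AddSubgroup (Fin N → ZMod 2)) (g : Fin N → ZMod 2),
      H ≠ ⊤ ∧ μ.support ⊆ {x : Fin N → ZMod 2 | ∃ h ∈ H, x = g + h})
    (s : Fin N → ZMod 2) (hs : s ≠ 0) : |Fco μ 0 s| < 1 := by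
  rcases (abs_Fco_le_one μ s).lt_or_eq with h | h
  · exact h
  exfalso
  have hF : Fco μ 0 s = 1 ∨ Fco μ 0 s = -1 := (abs_eq (by norm_num)).mp h
  have hF2 : Fco μ 0 s * Fco μ 0 s = 1 := by rcases hF with h1 | h1 <;> rw [h1] <;> norm_num
  obtain ⟨i0, hi0⟩ : ∃ i, s i ≠ 0 := by
    by_contra hc; push_neg at hc; exact hs (funext hc)
  have hsi0 : s i0 = 1 := (zmod2_cases (s i0)).resolve_left hi0
  set g0 : Fin N → ZMod 2 := Pi.single i0 1 with hg0def
  have hg0 : chi s g0 = -1 := chi_single s i0 hsi0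
  let H : AddSubgroup (Fin N → ZMod 2) :=
    { carrier := {x | chi s x = 1}
      zero_mem' := chi_zero_right s
      add_mem' := fun {a b} ha hb => by
        have ha' : chi s a = 1 := ha
        have hb' : chi s b = 1 := hb
        show chi s (a + b) = 1
        rw [chi_add_right, ha', hb', mul_one]
      neg_mem' := fun {a} ha => by
        show chi s (-a) = 1
        rwa [neg_eq_self'] }
  have hHne : H ≠ ⊤ := by
    intro htop
    have hmem : g0 ∈ H := htop ▸ AddSubgroup.mem_top g0
    have : chi s g0 = 1 := hmem
    rw [hg0] at this; norm_num at this
  have key : ∀ g, μ g ≠ 0 → chi s g = Fco μ 0 s := by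
    intro g hg
    have hsum : ∑ g' : Fin N → ZMod 2, rD μ 0 g' * (1 - Fco μ 0 s * chi s g') = 0 := by
      have e1 : ∀ g' : Fin N → ZMod 2, rD μ 0 g' * (1 - Fco μ 0 s * chi s g')
          = rD μ 0 g' - Fco μ 0 s * (rD μ 0 g' * chi s g') := fun g' => by ring
      simp_rw [e1]
      rw [Finset.sum_sub_distrib, sum_rD, ← Finset.mul_sum]
      rw [show (∑ g' : Fin N → ZMod 2, rD μ 0 g' * chi s g') = Fco μ 0 s from rfl]
      rw [hF2]; ring
    have hnn : ∀ g' ∈ (Finset.univ : Finset (Fin N → ZMod 2)),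
        0 ≤ rD μ 0 g' * (1 - Fco μ 0 s * chi s g') := by
      intro g' _
      apply mul_nonneg (rD_nonneg μ 0 g')
      have : Fco μ 0 s * chi s g' ≤ 1 := by
        rcases hF with h1 | h1 <;> rcases chi_eq_one_or_neg_one s g' with h2 | h2 <;>
          rw [h1, h2] <;> norm_num
      linarith
    have hz := (Finset.sum_eq_zero_iff_of_nonneg hnn).mp hsum g (Finset.mem_univ g)
    have hrg : rD μ 0 g ≠ 0 := (rD_zero_pos_iff μ g).mpr hg
    have h0 : 1 - Fco μ 0 s * chi s g = 0 := by
      rcases mul_eq_zero.mp hz with h' | h'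
      · exact absurd h' hrg
      · exact h'
    have hχ : Fco μ 0 s * chi s g = 1 := by linarith
    calc chi s g = Fco μ 0 s * (Fco μ 0 s * chi s g) := by rw [← mul_assoc, hF2, one_mul]
      _ = Fco μ 0 s := by rw [hχ, mul_one]
  apply hnd
  rcases hF with h1 | h1
  · refine ⟨H, 0, hHne, fun x hx => ?_⟩
    have : chi s x = 1 := by rw [key x ((PMF.mem_support_iff μ x).mp hx), h1]
    exact ⟨x, this, by rw [zero_add]⟩
  · refine ⟨H, g0, hHne, fun x hx => ?_⟩
    have hx1 : chi s x = -1 := by rw [key x ((PMF.mem_support_iff μ x).mp hx), h1]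
    refine ⟨g0 + x, ?_, ?_⟩
    · show chi s (g0 + x) = 1
      rw [chi_add_right, hg0, hx1]; norm_num
    · rw [← add_assoc, add_self_zero, zero_add]

lemma tendsto_rD (μ : PMF (Fin N → ZMod 2))
    (hlt : ∀ s : Fin N → ZMod 2, s ≠ 0 → |Fco μ 0 s| < 1) (g : Fin N → ZMod 2) :
    Filter.Tendsto (fun j => rD μ j g) Filter.atTop (nhds (((2 : ℝ) ^ N)⁻¹)) := by
  have hrepr : ∀ j, rD μ j g
      = ((2 : ℝ) ^ N)⁻¹ * ∑ s : Fin N → ZMod 2, (Fco μ 0 s) ^ (2 ^ j) * chi s g := by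
    intro j
    have hinv := inversion μ j g
    simp_rw [Fco_pow μ j] at hinv
    rw [hinv, inv_mul_cancel_left₀ (by positivity)]
  have hlim : Filter.Tendsto
      (fun j => ∑ s : Fin N → ZMod 2, (Fco μ 0 s) ^ (2 ^ j) * chi s g)
      Filter.atTop (nhds 1) := by
    have h1 : (1 : ℝ) = ∑ s : Fin N → ZMod 2, (if s = 0 then chi s g else 0) := by
      rw [Finset.sum_ite_eq' Finset.univ (0 : Fin N → ZMod 2) (fun s => chi s g)]
      simp [chi_zero_left]
    rw [h1]
    apply tendsto_finset_sum
    intro s _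
    by_cases hs : s = 0
    · subst hs
      simp only [if_pos rfl, Fco_zero, one_pow, one_mul]
      exact tendsto_const_nhds
    · simp only [if_neg hs]
      have h0 : Filter.Tendsto (fun n : ℕ => (Fco μ 0 s) ^ n) Filter.atTop (nhds 0) :=
        tendsto_pow_atTop_nhds_zero_of_abs_lt_one (hlt s hs)
      have h2 : Filter.Tendsto (fun j : ℕ => 2 ^ j) Filter.atTop Filter.atTop :=
        tendsto_pow_atTop_atTop_of_one_lt (by norm_num)
      have := (h0.comp h2).mul_const (chi s g)
      simpa using this
  have := hlim.const_mul ((2 : ℝ) ^ N)⁻¹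
  simp only [mul_one] at this
  exact Filter.Tendsto.congr (fun j => (hrepr j).symm) this

lemma tendsto_iterConv (μ : PMF (Fin N → ZMod 2))
    (hlt : ∀ s : Fin N → ZMod 2, s ≠ 0 → |Fco μ 0 s| < 1) (g : Fin N → ZMod 2) :
    Filter.Tendsto (fun j => iterConv μ j g) Filter.atTop (nhds ((2 ^ N : ℝ≥0∞)⁻¹)) := by
  have heq : ∀ j, iterConv μ j g = ENNReal.ofReal (rD μ j g) := fun j =>
    (ENNReal.ofReal_toReal (PMF.apply_ne_top _ _)).symm
  have hval : ENNReal.ofReal (((2 : ℝ) ^ N)⁻¹) = (2 ^ N : ℝ≥0∞)⁻¹ := by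
    rw [ENNReal.ofReal_inv_of_pos (by positivity), ENNReal.ofReal_pow (by norm_num)]
    norm_num
  have := (ENNReal.continuous_ofReal.tendsto _).comp (tendsto_rD μ hlt g)
  rw [Function.comp_def] at this
  rw [hval] at this
  exact Filter.Tendsto.congr (fun j => (heq j).symm) this



lemma card_sphere (i : ℕ) :
    ((Finset.univ : Finset (Fin N → ZMod 2)).filter fun g => degree g = i).card
      = N.choose i := by
  have h := Finset.card_powersetCard i (Finset.univ : Finset (Fin N))
  rw [Finset.card_univ, Fintype.card_fin] at h
  rw [← h]
  apply Finset.card_bij' (i := fun g _ => Finset.univ.filter fun k => g k = 1)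
    (j := fun S _ => fun k => if k ∈ S then 1 else 0)
  · intro g hg
    funext k
    simp only [Finset.mem_filter, Finset.mem_univ, true_and]
    rcases zmod2_cases (g k) with h0 | h1
    · rw [h0]; simp
    · rw [h1]; simp
  · intro S hS
    ext k
    simp only [Finset.mem_filter, Finset.mem_univ, true_and]
    constructor
    · intro hk
      by_contra hkn
      rw [if_neg hkn] at hk
      exact one_ne_zero hk.symm
    · intro hk; rw [if_pos hk]
  · intro g hg
    rw [Finset.mem_filter] at hg
    rw [Finset.mem_powersetCard]
    exact ⟨Finset.filter_subset _ _ |>.trans (by simp), hg.2⟩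
  · intro S hS
    rw [Finset.mem_powersetCard] at hS
    rw [Finset.mem_filter]
    refine ⟨Finset.mem_univ _, ?_⟩
    unfold degree
    rw [← hS.2]
    congr 1
    ext k
    simp only [Finset.mem_filter, Finset.mem_univ, true_and]
    constructor
    · intro hk
      by_contra hkn
      rw [if_neg hkn] at hk
      exact one_ne_zero hk.symm
    · intro hk; rw [if_pos hk]

lemma sum_degree (hN : 1 ≤ N) :
    ∑ g : Fin N → ZMod 2, degree g = N * 2 ^ (N - 1) := by
  set c : Fin N → ZMod 2 := fun _ => 1 with hc
  have hdeg : ∀ g : Fin N → ZMod 2, degree g + degree (g + c) = N := by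
    intro g
    have h1 : degree (g + c) = (Finset.univ.filter fun k => ¬ g k = 1).card := by
      unfold degree
      congr 1
      apply Finset.filter_congr
      intro k _
      have : (g + c) k = g k + 1 := rfl
      rw [this]
      rcases zmod2_cases (g k) with h0 | h1
      · rw [h0]; simp
      · rw [h1]; simp
    rw [h1]
    unfold degree
    rw [Finset.card_filter_add_card_filter_not]
    simp
  have h2 : 2 * ∑ g : Fin N → ZMod 2, degree g = 2 ^ N * N := by
    have hre : ∑ g : Fin N → ZMod 2, degree (g + c) = ∑ g : Fin N → ZMod 2, degree g :=
      Fintype.sum_equiv (Equiv.addRight c) _ _ fun g => rfl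
    have := Finset.sum_congr rfl (fun g (_ : g ∈ Finset.univ) => hdeg g)
    rw [Finset.sum_add_distrib, hre] at this
    rw [Finset.sum_const, Finset.card_univ, card_G, smul_eq_mul] at this
    omega
  have hpow : 2 ^ N = 2 * 2 ^ (N - 1) := by
    rw [← pow_succ']
    congr 1
    omega
  rw [hpow] at h2
  have h3 : 2 * ∑ g : Fin N → ZMod 2, degree g = 2 * (N * 2 ^ (N - 1)) := by
    rw [h2]; ring
  exact Nat.eq_of_mul_eq_mul_left two_pos h3


end s2


/-- if the support of `μ` is not contained in any coset of a proper additive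
subgroup of `G = (Fin N → ZMod 2)`, then the iterated recombinations `iterConv μ j`
converge pointwise to the uniform distribution `2^{-N}`; consequently the Hamming-weight
distribution converges to the Binomial `B(N, 1/2)` and the expected Hamming weight
converges to `N/2`. -/
theorem stmt_3 (N : ℕ) (hN : 1 ≤ N) (μ : PMF (Fin N → ZMod 2))
    (hnd : ¬ ∃ (H : AddSubgroup (Fin N → ZMod 2)) (g : Fin N → ZMod 2),
      H ≠ ⊤ ∧ μ.support ⊆ {x : Fin N → ZMod 2 | ∃ h ∈ H, x = g + h}) :
    (∀ g : Fin N → ZMod 2,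
      Filter.Tendsto (fun j => iterConv μ j g) Filter.atTop (nhds ((2 ^ N : ℝ≥0∞)⁻¹))) ∧
    (∀ i : ℕ, i ≤ N →
      Filter.Tendsto
        (fun j => (iterConv μ j).toOuterMeasure {g : Fin N → ZMod 2 | degree g = i})
        Filter.atTop (nhds ((N.choose i : ℝ≥0∞) / (2 ^ N : ℝ≥0∞)))) ∧
    Filter.Tendsto
      (fun j => ∑' g : Fin N → ZMod 2, iterConv μ j g * (degree g : ℝ≥0∞))
      Filter.atTop (nhds ((N : ℝ≥0∞) / 2)) := by
  have h1 : ∀ g : Fin N → ZMod 2,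
      Filter.Tendsto (fun j => iterConv μ j g) Filter.atTop (nhds ((2 ^ N : ℝ≥0∞)⁻¹)) :=
    tendsto_iterConv μ (abs_Fco_lt_one μ hnd)
  refine ⟨h1, ?_, ?_⟩
  · intro i _
    have key2 : ∀ j, (iterConv μ j).toOuterMeasure {g : Fin N → ZMod 2 | degree g = i}
        = ∑ g ∈ Finset.univ.filter (fun g : Fin N → ZMod 2 => degree g = i),
            iterConv μ j g := by
      intro j
      rw [PMF.toOuterMeasure_apply, tsum_fintype, Finset.sum_filter]
      refine Finset.sum_congr rfl fun g _ => ?_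
      rw [Set.indicator_apply]
      by_cases h : degree g = i <;> simp [h]
    have hten : Filter.Tendsto
        (fun j => ∑ g ∈ Finset.univ.filter (fun g : Fin N → ZMod 2 => degree g = i),
            iterConv μ j g) Filter.atTop
        (nhds (∑ _g ∈ Finset.univ.filter (fun g : Fin N → ZMod 2 => degree g = i),
            (2 ^ N : ℝ≥0∞)⁻¹)) :=
      tendsto_finset_sum _ fun g _ => h1 g
    rw [Finset.sum_const, card_sphere i] at hten
    have hval : (N.choose i : ℝ≥0∞) / (2 ^ N : ℝ≥0∞) = N.choose i • (2 ^ N : ℝ≥0∞)⁻¹ := by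
      rw [nsmul_eq_mul, div_eq_mul_inv]
    rw [hval]
    exact Filter.Tendsto.congr (fun j => (key2 j).symm) hten
  · have key3 : ∀ j, (∑' g : Fin N → ZMod 2, iterConv μ j g * (degree g : ℝ≥0∞))
        = ∑ g : Fin N → ZMod 2, iterConv μ j g * (degree g : ℝ≥0∞) := fun j => tsum_fintype _
    have hten : Filter.Tendsto
        (fun j => ∑ g : Fin N → ZMod 2, iterConv μ j g * (degree g : ℝ≥0∞))
        Filter.atTop
        (nhds (∑ g : Fin N → ZMod 2, (2 ^ N : ℝ≥0∞)⁻¹ * (degree g : ℝ≥0∞))) :=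
      tendsto_finset_sum _ fun g _ =>
        ENNReal.Tendsto.mul_const (h1 g) (Or.inr (ENNReal.natCast_ne_top _))
    have hsum : (∑ g : Fin N → ZMod 2, (2 ^ N : ℝ≥0∞)⁻¹ * (degree g : ℝ≥0∞))
        = (N : ℝ≥0∞) / 2 := by
      obtain ⟨M, rfl⟩ : ∃ M, N = M + 1 := ⟨N - 1, (Nat.succ_pred_eq_of_pos hN).symm⟩
      rw [← Finset.mul_sum]
      have hcast : (∑ g : Fin (M + 1) → ZMod 2, (degree g : ℝ≥0∞))
          = (((M + 1) * 2 ^ M : ℕ) : ℝ≥0∞) := by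
        rw [← Nat.cast_sum]
        congr 1
        simpa using sum_degree (N := M + 1) (by omega)
      rw [hcast]
      have ha0 : ((2 : ℝ≥0∞) ^ M) ≠ 0 := pow_ne_zero _ (by norm_num)
      have hat : ((2 : ℝ≥0∞) ^ M) ≠ ⊤ := ENNReal.pow_ne_top ENNReal.ofNat_ne_top
      have h2M : (2 : ℝ≥0∞) ^ (M + 1) = 2 ^ M * 2 := pow_succ _ _
      rw [h2M, ENNReal.mul_inv (Or.inl ha0) (Or.inl hat)]
      push_cast
      calc ((2 : ℝ≥0∞) ^ M)⁻¹ * 2⁻¹ * (((M : ℝ≥0∞) + 1) * 2 ^ M)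
          = ((M : ℝ≥0∞) + 1) * 2⁻¹ * (((2 : ℝ≥0∞) ^ M)⁻¹ * 2 ^ M) := by ring
        _ = ((M : ℝ≥0∞) + 1) * 2⁻¹ := by rw [ENNReal.inv_mul_cancel ha0 hat, mul_one]
        _ = ((M : ℝ≥0∞) + 1) / 2 := by rw [div_eq_mul_inv]
    rw [hsum] at hten
    exact Filter.Tendsto.congr (fun j => (key3 j).symm) hten

end Aux
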